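/- For x ∈ Z[ω], 0 ≤ gde(|x|², √2) − 2·gde(x, √2) ≤ 1. -/
import Mathlib


noncomputable section

open Complex

/-- The eighth root of unity ω = e^{iπ/4}. -/
def omg : ℂ := Complex.exp (Real.pi * Complex.I / 4)

/-- √2 as a complex number. -/
def rt2 : ℂ := (Real.sqrt 2 : ℝ)

/-- Membership in the ring Z[ω] = {a + bω + cω² + dω³ : a,b,c,d ∈ ℤ}. -/
def Zomega (z : ℂ) : Prop :=
  ∃ a b c d : ℤ, z = a + b * omg + c * omg ^ 2 + d * omg ^ 3

/-- Membership in the ring Z[1/√2, i] = {u/(√2)^n : u ∈ Z[ω], n ∈ ℕ}. -/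
def ZRoot2i (z : ℂ) : Prop :=
  ∃ u : ℂ, Zomega u ∧ ∃ n : ℕ, z = u / rt2 ^ n

/-- `b` divides `z` within the ring Z[ω]. -/
def ZDvd (b z : ℂ) : Prop := ∃ q : ℂ, Zomega q ∧ z = b * q

/-- `k` is the greatest dividing exponent of base `b` with respect to `z`:
`b^k` divides `z` in Z[ω], while `b^(k+1)` does not. -/
def IsGde (b z : ℂ) (k : ℕ) : Prop := ZDvd (b ^ k) z ∧ ¬ ZDvd (b ^ (k + 1)) z

/-- `k` is the smallest denominator exponent of base √2 with respect to `z`: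
the smallest integer `k` such that `z·(√2)^k ∈ Z[ω]`. -/
def IsSde (z : ℂ) (k : ℤ) : Prop :=
  Zomega (z * rt2 ^ k) ∧ ∀ j : ℤ, Zomega (z * rt2 ^ j) → k ≤ j

lemma rt2_sq : rt2 ^ 2 = 2 := by
  rw [rt2]; norm_cast; rw [Real.sq_sqrt]; norm_num

lemma rt2_ne : rt2 ≠ 0 := by
  rw [rt2]; norm_cast; positivity

lemma omg_eq : omg = ((Real.sqrt 2 / 2 : ℝ) : ℂ) + ((Real.sqrt 2 / 2 : ℝ) : ℂ) * I := by
  rw [omg, show (Real.pi : ℂ) * I / 4 = ((Real.pi/4 : ℝ) : ℂ) * I by push_cast; ring,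
    Complex.exp_mul_I, ← Complex.ofReal_cos, ← Complex.ofReal_sin,
    Real.cos_pi_div_four, Real.sin_pi_div_four]

lemma omg_sq : omg ^ 2 = I := by
  have h2 : ((Real.sqrt 2 : ℝ) : ℂ)^2 = 2 := rt2_sq
  rw [omg_eq]; push_cast
  linear_combination (I/2) * h2 + (((Real.sqrt 2:ℝ):ℂ)^2/4) * Complex.I_sq

lemma omg_cube : omg ^ 3 = -((Real.sqrt 2 / 2 : ℝ) : ℂ) + ((Real.sqrt 2 / 2 : ℝ) : ℂ) * I := by
  rw [show omg^3 = omg^2 * omg by ring, omg_sq, omg_eq]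
  push_cast
  linear_combination (((Real.sqrt 2:ℝ):ℂ)/2) * Complex.I_sq

lemma omg_pow4 : omg ^ 4 = -1 := by
  rw [show omg^4 = (omg^2)^2 by ring, omg_sq, Complex.I_sq]

lemma rt2_eq_omg : rt2 = omg - omg ^ 3 := by
  rw [rt2, omg_cube, omg_eq]; push_cast; ring

lemma conj_omg : (starRingEnd ℂ) omg = -omg ^ 3 := by
  rw [omg_cube, omg_eq, map_add, map_mul, Complex.conj_ofReal,
    Complex.conj_I]
  ring

lemma ratlem (p q : ℤ) (h : (p:ℝ) + q * (Real.sqrt 2 / 2) = 0) : p = 0 ∧ q = 0 := by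
  by_cases hq : q = 0
  · subst hq; simp at h; exact ⟨by exact_mod_cast h, rfl⟩
  · exfalso
    have hs : Real.sqrt 2 = ((-2 * p : ℤ):ℝ) / ((q:ℤ):ℝ) := by
      have : (q:ℝ) ≠ 0 := Int.cast_ne_zero.mpr hq
      field_simp
      push_cast at h ⊢
      linarith
    exact irrational_sqrt_two (hs ▸ ⟨((-2*p : ℤ):ℚ)/((q:ℤ):ℚ), by push_cast; ring⟩)

lemma unique0 (a b c d : ℤ)
    (h : (a:ℂ) + b * omg + c * omg ^ 2 + d * omg ^ 3 = 0) :
    a = 0 ∧ b = 0 ∧ c = 0 ∧ d = 0 := by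
  rw [omg_sq, omg_cube, omg_eq] at h
  have hre := congrArg Complex.re h
  have him := congrArg Complex.im h
  simp at hre him
  have h1 : ((a:ℤ):ℝ) + ((b - d : ℤ):ℝ) * (Real.sqrt 2 / 2) = 0 := by push_cast at hre ⊢; linarith
  have h2 : ((c:ℤ):ℝ) + ((b + d : ℤ):ℝ) * (Real.sqrt 2 / 2) = 0 := by push_cast at him ⊢; linarith
  obtain ⟨ha, hbd⟩ := ratlem _ _ h1
  obtain ⟨hc, hbd'⟩ := ratlem _ _ h2
  refine ⟨ha, ?_, hc, ?_⟩ <;> omega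

lemma conj_rt2 : (starRingEnd ℂ) rt2 = rt2 := Complex.conj_ofReal _

lemma mul_f (a b c d a' b' c' d' : ℤ) :
    ((a:ℂ) + b * omg + c * omg ^ 2 + d * omg ^ 3) *
      ((a':ℂ) + b' * omg + c' * omg ^ 2 + d' * omg ^ 3) =
    ((a*a' - b*d' - c*c' - d*b' : ℤ) : ℂ) + ((a*b' + b*a' - c*d' - d*c' : ℤ) : ℂ) * omg +
      ((a*c' + b*b' + c*a' - d*d' : ℤ) : ℂ) * omg ^ 2 +
      ((a*d' + b*c' + c*b' + d*a' : ℤ) : ℂ) * omg ^ 3 := by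
  push_cast
  linear_combination ((b:ℂ)*d' + c*c' + d*b' + (c*d' + d*c')*omg + d*d'*omg^2) * omg_pow4

lemma conj_f (a b c d : ℤ) :
    (starRingEnd ℂ) ((a:ℂ) + b * omg + c * omg ^ 2 + d * omg ^ 3) =
    ((a:ℂ) + ((-d : ℤ) : ℂ) * omg + ((-c : ℤ) : ℂ) * omg ^ 2 + ((-b : ℤ) : ℂ) * omg ^ 3) := by
  rw [map_add, map_add, map_add, map_mul, map_mul, map_mul, map_pow, map_pow, conj_omg]
  simp only [map_intCast]
  push_cast
  linear_combination ((c:ℂ)*omg^2 - d*omg^5 + d*omg) * omg_pow4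

lemma mul_rt2_f (A B C D : ℤ) :
    rt2 * ((A:ℂ) + B * omg + C * omg ^ 2 + D * omg ^ 3) =
    ((B - D : ℤ) : ℂ) + ((A + C : ℤ) : ℂ) * omg + ((B + D : ℤ) : ℂ) * omg ^ 2 +
      ((C - A : ℤ) : ℂ) * omg ^ 3 := by
  rw [rt2_eq_omg]
  push_cast
  linear_combination ((D:ℂ) - B - C*omg - D*omg^2) * omg_pow4

lemma Zomega.mul {z w : ℂ} (hz : Zomega z) (hw : Zomega w) : Zomega (z * w) := by
  obtain ⟨a, b, c, d, rfl⟩ := hz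
  obtain ⟨a', b', c', d', rfl⟩ := hw
  exact ⟨_, _, _, _, mul_f a b c d a' b' c' d'⟩

lemma Zomega.conj {z : ℂ} (hz : Zomega z) : Zomega ((starRingEnd ℂ) z) := by
  obtain ⟨a, b, c, d, rfl⟩ := hz
  exact ⟨_, _, _, _, conj_f a b c d⟩

lemma Zomega_rt2 : Zomega rt2 := ⟨0, 1, 0, -1, by rw [rt2_eq_omg]; push_cast; ring⟩

lemma Zomega_rt2_pow (n : ℕ) : Zomega (rt2 ^ n) := by
  induction n with
  | zero => exact ⟨1, 0, 0, 0, by push_cast; ring⟩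
  | succ n ih => rw [pow_succ]; exact ih.mul Zomega_rt2

lemma ZDvd_of_le {z : ℂ} {a b : ℕ} (h : b ≤ a) (hd : ZDvd (rt2 ^ a) z) :
    ZDvd (rt2 ^ b) z := by
  obtain ⟨q, hq, rfl⟩ := hd
  refine ⟨rt2 ^ (a - b) * q, (Zomega_rt2_pow _).mul hq, ?_⟩
  rw [← mul_assoc, ← pow_add]
  congr 2
  omega

lemma uniqueCoeffs (a b c d a' b' c' d' : ℤ)
    (h : (a:ℂ) + b * omg + c * omg ^ 2 + d * omg ^ 3 =
         (a':ℂ) + b' * omg + c' * omg ^ 2 + d' * omg ^ 3) :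
    a = a' ∧ b = b' ∧ c = c' ∧ d = d' := by
  have h0 : ((a - a' : ℤ):ℂ) + ((b - b' : ℤ):ℂ) * omg + ((c - c' : ℤ):ℂ) * omg ^ 2 +
      ((d - d' : ℤ):ℂ) * omg ^ 3 = 0 := by push_cast; linear_combination h
  obtain ⟨h1, h2, h3, h4⟩ := unique0 _ _ _ _ h0
  omega

lemma key {q w : ℂ} (hq : Zomega q) (hw : Zomega w)
    (h : q * (starRingEnd ℂ) q = 2 * w) : ZDvd rt2 q := by
  obtain ⟨a, b, c, d, rfl⟩ := hq
  obtain ⟨A, B, C, D, rfl⟩ := hw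
  rw [conj_f, mul_f, show (2:ℂ) * ((A:ℂ) + B * omg + C * omg ^ 2 + D * omg ^ 3) =
    ((2*A : ℤ):ℂ) + ((2*B : ℤ):ℂ) * omg + ((2*C : ℤ):ℂ) * omg ^ 2 + ((2*D : ℤ):ℂ) * omg ^ 3
    from by push_cast; ring] at h
  obtain ⟨e1, e2, -, -⟩ := uniqueCoeffs _ _ _ _ _ _ _ _ h
  -- parity in ZMod 2
  have two0 : (2 : ZMod 2) = 0 := by decide
  have hsq : ∀ x : ZMod 2, x ^ 2 = x := by decide
  have z1 : ((a : ZMod 2))^2 + (b:ZMod 2)^2 + (c:ZMod 2)^2 + (d:ZMod 2)^2 = 0 := by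
    have := congrArg (Int.cast : ℤ → ZMod 2) e1
    push_cast at this
    rw [two0] at this
    linear_combination this
  have hsum : (a : ZMod 2) + b + c + d = 0 := by
    rw [hsq, hsq, hsq, hsq] at z1; linear_combination z1
  have z2 : ((a:ZMod 2) + c) * ((b:ZMod 2) + d) = 0 := by
    have := congrArg (Int.cast : ℤ → ZMod 2) e2
    push_cast at this
    rw [two0] at this
    linear_combination this + (a:ZMod 2)*(d:ZMod 2)*two0
  have hboth : ((a:ZMod 2) + c) = 0 ∧ ((b:ZMod 2) + d) = 0 := by
    rcases mul_eq_zero.mp z2 with h' | h'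
    · exact ⟨h', by linear_combination hsum - h'⟩
    · exact ⟨by linear_combination hsum - h', h'⟩
  have d1 : (2:ℤ) ∣ (a + c) := by
    have : ((a + c : ℤ) : ZMod 2) = 0 := by push_cast; exact hboth.1
    exact_mod_cast (ZMod.intCast_zmod_eq_zero_iff_dvd _ 2).mp this
  have d2 : (2:ℤ) ∣ (b + d) := by
    have : ((b + d : ℤ) : ZMod 2) = 0 := by push_cast; exact hboth.2
    exact_mod_cast (ZMod.intCast_zmod_eq_zero_iff_dvd _ 2).mp this
  obtain ⟨e, he⟩ := d1
  obtain ⟨g, hg⟩ := d2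
  refine ⟨_, ⟨b - g, e, g, c - e, rfl⟩, ?_⟩
  rw [mul_rt2_f, show e - (c - e) = a by omega, show b - g + g = b by omega,
    show e + (c - e) = c by omega, show g - (b - g) = d by omega]

/-- For x ∈ Z[ω], 0 ≤ gde(|x|², √2) − 2·gde(x, √2) ≤ 1. -/
theorem stmt6 (x : ℂ) (hx : Zomega x) (hx0 : x ≠ 0) (k m : ℕ)
    (hk : IsGde rt2 x k) (hm : IsGde rt2 (x * (starRingEnd ℂ) x) m) :
    2 * k ≤ m ∧ m ≤ 2 * k + 1 := by
  obtain ⟨⟨q, hqZ, hxq⟩, hk2⟩ := hk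
  have hfac : x * (starRingEnd ℂ) x = rt2 ^ (2 * k) * (q * (starRingEnd ℂ) q) := by
    rw [hxq, map_mul, map_pow, conj_rt2]
    ring
  constructor
  · by_contra hlt
    push_neg at hlt
    exact hm.2 (ZDvd_of_le (by omega) (a := 2 * k)
      ⟨q * (starRingEnd ℂ) q, hqZ.mul hqZ.conj, hfac⟩)
  · by_contra hlt
    push_neg at hlt
    obtain ⟨w, hwZ, hw⟩ := ZDvd_of_le (show 2 * k + 2 ≤ m by omega) hm.1
    have hqq : q * (starRingEnd ℂ) q = 2 * w := by
      have h1 : rt2 ^ (2 * k) * (q * (starRingEnd ℂ) q) = rt2 ^ (2 * k) * (2 * w) := by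
        rw [← hfac, hw, show 2 * k + 2 = 2 * k + 2 from rfl, pow_add, rt2_sq]
        ring
      exact mul_left_cancel₀ (pow_ne_zero _ rt2_ne) h1
    obtain ⟨r, hrZ, hr⟩ := key hqZ hwZ hqq
    exact hk2 ⟨r, hrZ, by rw [hxq, hr, pow_succ]; ring⟩
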